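/- Let r ∈ ℕ and let {A₁,A₂} and {C₁,C₂} be crossing separations of a connected graph G with r-tomic separators X := A₁∩A₂ and Y := C₁∩C₂. Then X and Y are r-coupled. -/

import Mathlib

namespace LS

open SimpleGraph

variable {V : Type*}

/-- `(A, B)` is an (oriented) separation of `G`: the two sides cover `V`
and there is no edge between `A ∖ B` and `B ∖ A`. -/
def IsSep (G : SimpleGraph V) (A B : Set V) : Prop :=
  A ∪ B = Set.univ ∧ ∀ a ∈ A \ B, ∀ b ∈ B \ A, ¬G.Adj a b

/-- `(A,B) ≥ (C,D)` for oriented separations, i.e. `A ⊆ C` and `B ⊇ D`. -/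
def SepGE (s t : Set V × Set V) : Prop := s.1 ⊆ t.1 ∧ t.2 ⊆ s.2

/-- Two (unoriented) separations are nested if they have `≥`-comparable orientations. -/
def Nested (s t : Set V × Set V) : Prop :=
  SepGE s t ∨ SepGE s (t.2, t.1) ∨ SepGE (s.2, s.1) t ∨ SepGE (s.2, s.1) (t.2, t.1)

/-- Two separations cross if they are not nested. -/
def Crosses (s t : Set V × Set V) : Prop := ¬Nested s t

/-- The neighbourhood `N_G(K)` of a vertex set `K`. -/
def nbhdSet (G : SimpleGraph V) (K : Set V) : Set V :=
  {v | v ∉ K ∧ ∃ u ∈ K, G.Adj u v}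

/-- `K` is (the vertex set of) a connected component of the subgraph of `G` induced on `S`. -/
def IsCompOf (G : SimpleGraph V) (K S : Set V) : Prop :=
  K.Nonempty ∧ K ⊆ S ∧ (G.induce K).Connected ∧ ∀ a ∈ K, ∀ b ∈ S, G.Adj a b → b ∈ K

/-- `K` is a component of `G − X` that is tight at `X`, i.e. `N_G(K) = X`. -/
def TightCompAt (G : SimpleGraph V) (K X : Set V) : Prop :=
  IsCompOf G K Xᶜ ∧ nbhdSet G K = X

/-- A separation `{A,B}` is tight if `G − (A ∩ B)` has tight components
contained in `A` and in `B`, respectively. -/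
def TightSep (G : SimpleGraph V) (A B : Set V) : Prop :=
  (∃ K, TightCompAt G K (A ∩ B) ∧ K ⊆ A) ∧ ∃ K, TightCompAt G K (A ∩ B) ∧ K ⊆ B

/-- `X` is a tight separator: `G − X` has at least two components tight at `X`. -/
def TightSeparator (G : SimpleGraph V) (X : Set V) : Prop :=
  ∃ K₁ K₂, K₁ ≠ K₂ ∧ TightCompAt G K₁ X ∧ TightCompAt G K₂ X

/-- The set `E_G(S,T)` of edges of `G` with one end in `S` and the other in `T`. -/
def edgesBetween (G : SimpleGraph V) (S T : Set V) : Set (Sym2 V) :=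
  {e | ∃ u v, G.Adj u v ∧ e = s(u, v) ∧ u ∈ S ∧ v ∈ T}

/-- `∂X`: the set of edges of `G` with exactly one end in `X`. -/
def edgeBdry (G : SimpleGraph V) (X : Set V) : Set (Sym2 V) :=
  {e | ∃ u v, G.Adj u v ∧ e = s(u, v) ∧ u ∈ X ∧ v ∉ X}

/-- The separator of an oriented separation. -/
def tsSep (s : Set V × Set V) : Set V := s.1 ∩ s.2

/-- `p` lists the three distinct oriented separations of a ⊤-star. -/
def IsTStar (G : SimpleGraph V) (p : Fin 3 → Set V × Set V) : Prop :=
  Function.Injective p ∧ (∀ i, IsSep G (p i).1 (p i).2) ∧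
  (∀ i j, i ≠ j → Disjoint ((p i).1 \ (p i).2) ((p j).1 \ (p j).2)) ∧
  (⋃ i, ((p i).1 \ (p i).2)) = (⋃ i, tsSep (p i))ᶜ ∧
  ∀ i, ∀ v ∈ tsSep (p i), ∃ j, j ≠ i ∧ v ∈ tsSep (p j)

/-- The centre `Z` of a ⊤-star. -/
def tsCentre (p : Fin 3 → Set V × Set V) : Set V := ⋂ i, tsSep (p i)

/-- The `ij`-link `X_{ij}` of a ⊤-star. -/
def tsLink (p : Fin 3 → Set V × Set V) (i j : Fin 3) : Set V :=
  (tsSep (p i) ∩ tsSep (p j)) \ tsCentre p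

/-- The ⊤-star `p` is relevant with base `p 0`. -/
def RelevantTStar (G : SimpleGraph V) (p : Fin 3 → Set V × Set V) : Prop :=
  IsTStar G p ∧ TightSep G (p 0).1 (p 0).2 ∧
  ∀ x ∈ tsLink p 1 2, ∀ i : Fin 3, i ≠ 0 →
    (∃ y ∈ tsLink p 0 i, G.Adj x y) ∨
    ∃ y ∈ tsLink p 0 i ∪ tsCentre p, ∃ K, IsCompOf G K ((p i).1 \ (p i).2) ∧
      x ∈ nbhdSet G K ∧ y ∈ nbhdSet G K

/-- A bottleneck of order `k` in `G`, encoded as a set of oriented separations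
closed under reversal (representing a set of unoriented separations). -/
def IsBottleneck (G : SimpleGraph V) (k : ℕ) (β : Set (Set V × Set V)) : Prop :=
  β.Nonempty ∧ (∀ s ∈ β, (s.2, s.1) ∈ β) ∧
  (∀ s ∈ β, IsSep G s.1 s.2 ∧ TightSep G s.1 s.2 ∧ (s.1 ∩ s.2).encard = k) ∧
  ∀ p : Fin 3 → Set V × Set V, RelevantTStar G p →
    (∀ i, (tsSep (p i)).encard ≤ (k : ℕ∞)) → p 0 ∈ β → p 1 ∈ β ∨ p 2 ∈ β

/-! ### Tangles -/

/-- A tangle of order `ℓ` in `G`. -/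
def IsTangle (G : SimpleGraph V) (ℓ : ℕ) (τ : Set (Set V × Set V)) : Prop :=
  (∀ s ∈ τ, IsSep G s.1 s.2 ∧ (s.1 ∩ s.2).encard < (ℓ : ℕ∞)) ∧
  (∀ A B : Set V, IsSep G A B → (A ∩ B).encard < (ℓ : ℕ∞) → ((A, B) ∈ τ ∨ (B, A) ∈ τ)) ∧
  (∀ A B : Set V, (A, B) ∈ τ → (B, A) ∈ τ → A = B) ∧
  ∀ s₁ ∈ τ, ∀ s₂ ∈ τ, ∀ s₃ ∈ τ,
    ¬(s₁.1 ∪ s₂.1 ∪ s₃.1 = Set.univ ∧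
      ∀ u v : V, G.Adj u v →
        (u ∈ s₁.1 ∧ v ∈ s₁.1) ∨ (u ∈ s₂.1 ∧ v ∈ s₂.1) ∨ (u ∈ s₃.1 ∧ v ∈ s₃.1))

/-- The separation `{A,B}` distinguishes the tangles `τ` and `τ'`. -/
def DistinguishesT (τ τ' : Set (Set V × Set V)) (A B : Set V) : Prop :=
  ((A, B) ∈ τ ∧ (B, A) ∈ τ') ∨ ((B, A) ∈ τ ∧ (A, B) ∈ τ')

/-- The separation `{A,B}` distinguishes the vertex sets `Y` and `Z`. -/
def DistSets (Y Z A B : Set V) : Prop :=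
  (Y ⊆ A ∧ (Y ∩ (A \ B)).Nonempty ∧ Z ⊆ B ∧ (Z ∩ (B \ A)).Nonempty) ∨
  (Y ⊆ B ∧ (Y ∩ (B \ A)).Nonempty ∧ Z ⊆ A ∧ (Z ∩ (A \ B)).Nonempty)

/-! ### The construction of the nested sets `N^k(G)` -/

/-- `X^k`: the union of all `k`-bottlenecks in `G`. -/
def Xk (G : SimpleGraph V) (k : ℕ) : Set (Set V × Set V) :=
  {s | ∃ β, IsBottleneck G k β ∧ s ∈ β}

/-- `x^k(s)`: the number of separations in `X^k` that `s` crosses. -/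
noncomputable def xk (G : SimpleGraph V) (k : ℕ) (s : Set V × Set V) : ℕ :=
  {t ∈ Xk G k | Crosses s t}.ncard

/-- `N^k(G,β)` relative to a previously constructed set `M` of separations:
the elements of `β` nested with `M` that minimise `x^k` among those. -/
def NkOfBeta (G : SimpleGraph V) (M : Set (Set V × Set V)) (k : ℕ)
    (β : Set (Set V × Set V)) : Set (Set V × Set V) :=
  {s ∈ β | (∀ t ∈ M, Nested s t) ∧
    ∀ s' ∈ β, (∀ t ∈ M, Nested s' t) → xk G k s ≤ xk G k s'}

/-- `N^k(G)` relative to a previously constructed set `M`. -/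
def NkStep (G : SimpleGraph V) (M : Set (Set V × Set V)) (k : ℕ) :
    Set (Set V × Set V) :=
  {s | ∃ β, IsBottleneck G k β ∧ s ∈ NkOfBeta G M k β}

/-- `N^{<k}(G) = ⋃_{j<k} N^j(G)`. -/
noncomputable def Nlt (G : SimpleGraph V) : ℕ → Set (Set V × Set V)
  | 0 => ∅
  | k + 1 => Nlt G k ∪ NkStep G (Nlt G k) k

/-- `N^k(G)`. -/
noncomputable def Nk (G : SimpleGraph V) (k : ℕ) : Set (Set V × Set V) :=
  NkStep G (Nlt G k) k

/-- `N(G) = ⋃_k N^k(G)`. -/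
noncomputable def NSet (G : SimpleGraph V) : Set (Set V × Set V) :=
  ⋃ k, Nk G k

/-! ### Walks, local components and local separations -/

/-- An `X`-walk: a walk having precisely its first and last vertex in `X`. -/
def IsXWalk (G : SimpleGraph V) (X : Set V) {u v : V} (W : G.Walk u v) : Prop :=
  u ∈ X ∧ v ∈ X ∧ ∀ w ∈ W.support, w ∈ X → w = u ∨ w = v

/-- An `r`-local `X`-walk: an `X`-walk contained in a cycle of length `≤ r`,
or an `X`-walk consisting of a single `X`-edge. -/
def IsLocalXWalk (G : SimpleGraph V) (r : ℕ) (X : Set V) {u v : V} (W : G.Walk u v) :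
    Prop :=
  IsXWalk G X W ∧
  ((∃ (a : V) (C : G.Walk a a), C.IsCycle ∧ C.length ≤ r ∧ ∀ e ∈ W.edges, e ∈ C.edges) ∨
    W.length = 1)

/-- An `r`-local `X`-path. -/
def IsLocalXPath (G : SimpleGraph V) (r : ℕ) (X : Set V) {u v : V} (W : G.Walk u v) :
    Prop :=
  IsLocalXWalk G r X W ∧ W.IsPath

/-- Walks that are concatenations of `r`-local `X`-paths. -/
inductive ConcatLocalPaths (G : SimpleGraph V) (r : ℕ) (X : Set V) :
    ∀ {u v : V}, G.Walk u v → Prop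
  | single {u v : V} (W : G.Walk u v) (h : IsLocalXPath G r X W) :
      ConcatLocalPaths G r X W
  | comp {u v w : V} (W₁ : G.Walk u v) (W₂ : G.Walk v w)
      (h₁ : IsLocalXPath G r X W₁) (h₂ : ConcatLocalPaths G r X W₂) :
      ConcatLocalPaths G r X (W₁.append W₂)

/-- `W ∈ W_r(X)`: `W` is a concatenation of `r`-local `X`-paths repeating no vertex of `X`. -/
def MemWr (G : SimpleGraph V) (r : ℕ) (X : Set V) {u v : V} (W : G.Walk u v) : Prop :=
  ConcatLocalPaths G r X W ∧ ∀ x ∈ X, ¬W.support.Duplicate x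

/-- `X` is `r`-tomic: any two of its vertices are joined by a walk in `W_r(X)`. -/
def Rtomic (G : SimpleGraph V) (r : ℕ) (X : Set V) : Prop :=
  ∀ x ∈ X, ∀ y ∈ X, x ≠ y → ∃ W : G.Walk x y, MemWr G r X W

/-- One step of the relation generating the `r`-local components at `X`:
`e = f`, or `e` and `f` are the first and last edges of an `r`-local `X`-walk
(both required to lie in `∂X`). -/
def LocalEdgeStep (G : SimpleGraph V) (r : ℕ) (X : Set V) (e f : Sym2 V) : Prop :=
  e ∈ edgeBdry G X ∧ f ∈ edgeBdry G X ∧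
  (e = f ∨ ∃ (u v : V) (W : G.Walk u v), IsLocalXWalk G r X W ∧
      W.edges.head? = some e ∧ W.edges.getLast? = some f)

/-- `F` is an `r`-local component at `X`: an equivalence class of the transitive
closure of `LocalEdgeStep` on `∂X`. -/
def LocalCompAt (G : SimpleGraph V) (r : ℕ) (X : Set V) (F : Set (Sym2 V)) : Prop :=
  ∃ e ∈ edgeBdry G X, F = {f | Relation.ReflTransGen (LocalEdgeStep G r X) e f}

/-- An edge set `F` is tight with respect to `X` if every vertex of `X`
is incident with an edge of `F`. -/
def TightLocalComp (X : Set V) (F : Set (Sym2 V)) : Prop :=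
  ∀ x ∈ X, ∃ e ∈ F, x ∈ e

/-- `X` is a tight `r`-local separator: at least two tight `r`-local components at `X`. -/
def TightLocalSeparator (G : SimpleGraph V) (r : ℕ) (X : Set V) : Prop :=
  ∃ F₁ F₂, F₁ ≠ F₂ ∧ LocalCompAt G r X F₁ ∧ LocalCompAt G r X F₂ ∧
    TightLocalComp X F₁ ∧ TightLocalComp X F₂

/-- `(E₁, X, E₂)` is an (oriented) `r`-local separation of `G`. -/
def IsLocalSep (G : SimpleGraph V) (r : ℕ) (E₁ : Set (Sym2 V)) (X : Set V)
    (E₂ : Set (Sym2 V)) : Prop :=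
  Disjoint E₁ E₂ ∧ E₁ ∪ E₂ = edgeBdry G X ∧
    ∀ F, LocalCompAt G r X F → F ⊆ E₁ ∨ F ⊆ E₂

/-- A tight `r`-local separation: each side includes a tight `r`-local component at `X`. -/
def TightLocalSep (G : SimpleGraph V) (r : ℕ) (E₁ : Set (Sym2 V)) (X : Set V)
    (E₂ : Set (Sym2 V)) : Prop :=
  IsLocalSep G r E₁ X E₂ ∧
  (∃ F, LocalCompAt G r X F ∧ TightLocalComp X F ∧ F ⊆ E₁) ∧
  ∃ F, LocalCompAt G r X F ∧ TightLocalComp X F ∧ F ⊆ E₂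

/-- The oriented `r`-local separation `s_r` induced by the oriented separation
`s = (A₁, A₂)`: its separator is `X = A₁ ∩ A₂`, and its sides are
`E_i = E_G(A_i ∖ X, X)`. -/
def inducedLocal (G : SimpleGraph V) (s : Set V × Set V) :
    Set (Sym2 V) × Set V × Set (Sym2 V) :=
  (edgesBetween G (s.1 \ (s.1 ∩ s.2)) (s.1 ∩ s.2), s.1 ∩ s.2,
    edgesBetween G (s.2 \ (s.1 ∩ s.2)) (s.1 ∩ s.2))

/-- Some cycle of `G` of length `≤ r` alternates between the disjoint sets `X` and `Y`:
it visits four distinct vertices `x, y, x', y'` in this cyclic order with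
`x, x' ∈ X` and `y, y' ∈ Y`. -/
def Alternates (G : SimpleGraph V) (r : ℕ) (X Y : Set V) : Prop :=
  ∃ (a : V) (C : G.Walk a a), C.IsCycle ∧ C.length ≤ r ∧
    ∃ (x y x' y' : V) (l₁ l₂ l₃ l₄ l₅ : List V),
      x ∈ X ∧ x' ∈ X ∧ y ∈ Y ∧ y' ∈ Y ∧ x ≠ x' ∧ y ≠ y' ∧
      C.support = l₁ ++ x :: l₂ ++ y :: l₃ ++ x' :: l₄ ++ y' :: l₅

/-- `X` and `Y` are `r`-coupled. -/
def RCoupled (G : SimpleGraph V) (r : ℕ) (X Y : Set V) : Prop :=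
  (X ∩ Y).Nonempty ∨ (Disjoint X Y ∧ Alternates G r X Y)

/-- The `X`-link for the side `Fi` of an `r`-local separation with separator `Y`:
vertices `x ∈ X ∖ Y` from which some walk in `W_r(X)` visits `Y` with its first
edge in `∂Y` lying in `Fi`. -/
def LocalLink (G : SimpleGraph V) (r : ℕ) (X Y : Set V) (Fi : Set (Sym2 V)) : Set V :=
  {x | x ∈ X \ Y ∧ ∃ (z : V) (W : G.Walk x z), MemWr G r X W ∧
      (∃ y ∈ Y, y ∈ W.support) ∧
      ∃ (e : Sym2 V) (l₁ l₂ : List (Sym2 V)), W.edges = l₁ ++ e :: l₂ ∧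
        e ∈ edgeBdry G Y ∧ e ∈ Fi ∧ ∀ e' ∈ l₁, e' ∉ edgeBdry G Y}

/-- The `r`-local separations `{E₁,X,E₂}` and `{F₁,Y,F₂}` cross. -/
def LocalCrosses (G : SimpleGraph V) (r : ℕ) (E₁ : Set (Sym2 V)) (X : Set V)
    (E₂ : Set (Sym2 V)) (F₁ : Set (Sym2 V)) (Y : Set V) (F₂ : Set (Sym2 V)) : Prop :=
  RCoupled G r X Y ∧ ∀ i j : Bool,
    (LocalLink G r X Y (cond j F₁ F₂)).Nonempty ∨
    (LocalLink G r Y X (cond i E₁ E₂)).Nonempty ∨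
    ((cond i E₁ E₂) ∩ (cond j F₁ F₂) ∩ edgeBdry G (X ∩ Y)).Nonempty

/-- The edge set of a walk, as a set. -/
def walkEdgeSet {G : SimpleGraph V} {a b : V} (W : G.Walk a b) : Set (Sym2 V) :=
  {e | e ∈ W.edges}

/-- The binary cycle space of `G` is generated by the cycles of length `≤ r`:
the edge set of every cycle is a symmetric difference of edge sets of cycles
of length `≤ r`. -/
def CycleSpaceGenShort (G : SimpleGraph V) (r : ℕ) : Prop :=
  ∀ ⦃a : V⦄ (C : G.Walk a a), C.IsCycle →
    ∃ L : List ((b : V) × G.Walk b b),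
      (∀ p ∈ L, p.2.IsCycle ∧ p.2.length ≤ r) ∧
      walkEdgeSet C = L.foldr (fun p E => symmDiff (walkEdgeSet p.2) E) ∅

/-! ### Local ⊤-stars and local bottlenecks -/

/-- `q` lists the three oriented `r`-local separations of an `r`-local ⊤-star. -/
def IsLocalTStar (G : SimpleGraph V) (r : ℕ)
    (q : Fin 3 → Set (Sym2 V) × Set V × Set (Sym2 V)) : Prop :=
  Function.Injective q ∧
  (∀ i, IsLocalSep G r (q i).1 (q i).2.1 (q i).2.2) ∧
  (∀ i j, i ≠ j → Disjoint (q i).1 (q j).1) ∧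
  (⋃ i, (q i).1) = edgeBdry G (⋃ i, (q i).2.1) ∧
  (∀ i, ∀ v ∈ (q i).2.1, ∃ j, j ≠ i ∧ v ∈ (q j).2.1) ∧
  ∀ F, LocalCompAt G r (⋃ i, (q i).2.1) F → ∃ i, F ⊆ (q i).1

/-- The `r`-local ⊤-star `q` is relevant with base `q 0`. -/
def RelevantLocalTStar (G : SimpleGraph V) (r : ℕ)
    (q : Fin 3 → Set (Sym2 V) × Set V × Set (Sym2 V)) : Prop :=
  IsLocalTStar G r q ∧ TightLocalSep G r (q 0).1 (q 0).2.1 (q 0).2.2 ∧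
  ∀ x ∈ ((q 1).2.1 ∩ (q 2).2.1) \ ⋂ j, (q j).2.1, ∀ i : Fin 3, i ≠ 0 →
    (∃ y ∈ ((q 0).2.1 ∩ (q i).2.1) \ ⋂ j, (q j).2.1, G.Adj x y) ∨
    ∃ F, LocalCompAt G r (⋃ j, (q j).2.1) F ∧ F ⊆ (q i).1 ∧
      (∃ e ∈ F, x ∈ e) ∧ ∃ e ∈ F, ∃ y ∈ (q 0).2.1 ∩ (q i).2.1, y ∈ e

/-- An `r`-local bottleneck of order `k` in `G`, encoded as a set of oriented
`r`-local separations closed under reversal. -/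
def IsLocalBottleneck (G : SimpleGraph V) (r k : ℕ)
    (β : Set (Set (Sym2 V) × Set V × Set (Sym2 V))) : Prop :=
  β.Nonempty ∧ (∀ q ∈ β, (q.2.2, q.2.1, q.1) ∈ β) ∧
  (∀ q ∈ β, TightLocalSep G r q.1 q.2.1 q.2.2 ∧ q.2.1.encard = (k : ℕ∞)) ∧
  ∀ p : Fin 3 → Set (Sym2 V) × Set V × Set (Sym2 V), RelevantLocalTStar G r p →
    (∀ i, ((p i).2.1).encard ≤ (k : ℕ∞)) → p 0 ∈ β → p 1 ∈ β ∨ p 2 ∈ β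

/-! ### Auxiliary lemmas for Statement 9 -/

section Statement9Aux

variable {G : SimpleGraph V} {r : ℕ}

private lemma split_unique {α : Type*} {y : α} :
    ∀ (a : List α) (U : List α) {b W : List α},
      a ++ y :: b = U ++ y :: W → y ∉ a → y ∉ U → a = U ∧ b = W := by
  intro a
  induction a with
  | nil =>
    intro U b W h hya hyU
    cases U with
    | nil => simpa using h
    | cons u U' =>
      rw [List.nil_append, List.cons_append] at h
      obtain ⟨rfl, -⟩ : y = u ∧ _ := List.cons.inj h
      exact absurd (List.mem_cons_self) hyU
  | cons c a' ih =>
    intro U b W h hya hyU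
    cases U with
    | nil =>
      rw [List.nil_append, List.cons_append] at h
      obtain ⟨rfl, -⟩ : c = y ∧ _ := List.cons.inj h
      exact absurd (List.mem_cons_self) hya
    | cons u U' =>
      rw [List.cons_append, List.cons_append] at h
      obtain ⟨rfl, h2⟩ : c = u ∧ _ := List.cons.inj h
      obtain ⟨h3, h4⟩ := ih U' h2 (fun hy => hya (List.mem_cons_of_mem _ hy))
        (fun hy => hyU (List.mem_cons_of_mem _ hy))
      exact ⟨by rw [h3], h4⟩

private lemma mem_of_getLast?' {α : Type*} {l : List α} {a : α}
    (h : l.getLast? = some a) : a ∈ l := by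
  have := List.dropLast_append_getLast? a (by rw [h]; rfl)
  rw [← this]
  simp

private lemma getLast?_concat' {α : Type*} (l : List α) (a : α) :
    (l ++ [a]).getLast? = some a := by
  rw [List.getLast?_append_cons]
  rfl

private lemma support_concat {u v : V} (p : G.Walk u v) :
    ∃ l, p.support = l ++ [v] := by
  induction p with
  | nil => exact ⟨[], rfl⟩
  | @cons a b c h q ih =>
    obtain ⟨l, hl⟩ := ih
    exact ⟨a :: l, by rw [Walk.support_cons, hl]; rfl⟩

private lemma support_getLast? {u v : V} (p : G.Walk u v) :
    p.support.getLast? = some v := by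
  obtain ⟨l, hl⟩ := support_concat p
  rw [hl, getLast?_concat']

private lemma exists_crossing_adj {S : Set V} :
    ∀ {u v : V}, G.Walk u v → u ∈ S → v ∉ S →
      ∃ a b, G.Adj a b ∧ a ∈ S ∧ b ∉ S := by
  intro u v p
  induction p with
  | nil => intro hu hv; exact absurd hu hv
  | @cons u w v h q ih =>
    intro hu hv
    by_cases hw : w ∈ S
    · exact ih hw hv
    · exact ⟨u, w, h, hu, hw⟩

private lemma cross_list {C₁ C₂ : Set V}
    (hcov : C₁ ∪ C₂ = Set.univ)
    (hsep : ∀ u ∈ C₁ \ C₂, ∀ v ∈ C₂ \ C₁, ¬G.Adj u v) :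
    ∀ (L : List V), List.Chain' G.Adj L → ∀ u v : V,
      L.head? = some u → L.getLast? = some v → u ∈ C₁ → v ∈ C₂ →
      ∃ y ∈ L, y ∈ C₁ ∧ y ∈ C₂ := by
  intro L
  induction L with
  | nil => intro _ u v h; simp at h
  | cons w L' ih =>
    intro hch u v hh hl hu hv
    rw [List.head?_cons, Option.some.injEq] at hh
    subst hh
    by_cases hu2 : w ∈ C₂
    · exact ⟨w, List.mem_cons_self, hu, hu2⟩
    cases L' with
    | nil =>
      simp only [List.getLast?_singleton, Option.some.injEq] at hl
      exact absurd (hl ▸ hv) hu2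
    | cons w' L'' =>
      have hadj : G.Adj w w' := (List.isChain_cons_cons.mp hch).1
      have hch' := (List.isChain_cons_cons.mp hch).2
      have hw1 : w' ∈ C₁ := by
        have hmem : w' ∈ C₁ ∪ C₂ := by rw [hcov]; trivial
        rcases hmem with h1 | h2
        · exact h1
        · by_contra hn
          exact hsep w ⟨hu, hu2⟩ w' ⟨h2, hn⟩ hadj
      have hl' : (w' :: L'').getLast? = some v := by
        rwa [List.getLast?_cons_cons] at hl
      obtain ⟨y, hyL, hy⟩ := ih hch' w' v rfl hl' hw1 hv
      exact ⟨y, List.mem_cons_of_mem _ hyL, hy⟩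

private def AltPattern (X Y : Set V) (s : List V) : Prop :=
  ∃ (x y x' y' : V) (l₁ l₂ l₃ l₄ l₅ : List V),
    x ∈ X ∧ x' ∈ X ∧ y ∈ Y ∧ y' ∈ Y ∧ x ≠ x' ∧ y ≠ y' ∧
    s = l₁ ++ x :: l₂ ++ y :: l₃ ++ x' :: l₄ ++ y' :: l₅

private lemma alt_of_pattern {X Y : Set V} {a : V} {O : G.Walk a a}
    (hc : O.IsCycle) (hlen : O.length ≤ r) (hp : AltPattern X Y O.support) :
    Alternates G r X Y := by
  obtain ⟨x, y, x', y', m₁, m₂, m₃, m₄, m₅, h1, h2, h3, h4, h5, h6, h7⟩ := hp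
  exact ⟨a, O, hc, hlen, x, y, x', y', m₁, m₂, m₃, m₄, m₅, h1, h2, h3, h4, h5, h6, h7⟩

private lemma ordered_core {C₁ C₂ X : Set V}
    (hcov : C₁ ∪ C₂ = Set.univ)
    (hsep : ∀ u ∈ C₁ \ C₂, ∀ v ∈ C₂ \ C₁, ¬G.Adj u v)
    (hd : ∀ v ∈ X, v ∈ C₁ → v ∈ C₂ → False)
    {a p q : V} {t l₁ l₂ l₃ : List V}
    (hchain : List.Chain' G.Adj (a :: t))
    (ht : t = l₁ ++ p :: l₂ ++ q :: l₃)
    (hnd : t.Nodup)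
    (hlast : (a :: t).getLast? = some a)
    (hpX : p ∈ X) (hp1 : p ∈ C₁) (hp2 : p ∉ C₂)
    (hqX : q ∈ X) (hq2 : q ∈ C₂) (hq1 : q ∉ C₁) :
    AltPattern X (C₁ ∩ C₂) (a :: t) ∨ AltPattern (C₁ ∩ C₂) X (a :: t) := by
  classical
  have hpq : p ≠ q := fun h => hq1 (h ▸ hp1)
  have hsep' : ∀ u ∈ C₂ \ C₁, ∀ v ∈ C₁ \ C₂, ¬G.Adj u v :=
    fun u hu v hv hadj => hsep v hv u hu hadj.symm
  have hcov' : C₂ ∪ C₁ = Set.univ := by rw [Set.union_comm]; exact hcov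
  have htne : t ≠ [] := by rw [ht]; simp
  have hlt : t.getLast? = some a := by
    rwa [show a :: t = [a] ++ t from rfl, List.getLast?_append_of_ne_nil _ htne] at hlast
  -- find y in the arc from p to q
  have hinfix1 : (p :: l₂ ++ [q]) <:+: (a :: t) := ⟨a :: l₁, l₃, by simp [ht]⟩
  have hch1 : List.Chain' G.Adj (p :: l₂ ++ [q]) := hchain.infix hinfix1
  obtain ⟨y, hyL, hy1, hy2⟩ := cross_list hcov hsep _ hch1 p q rfl
    (by rw [show p :: l₂ ++ [q] = (p :: l₂) ++ [q] from rfl, getLast?_concat']) hp1 hq2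
  have hyp : y ≠ p := fun h => hp2 (h ▸ hy2)
  have hyq : y ≠ q := fun h => hq1 (h ▸ hy1)
  have hyl₂ : y ∈ l₂ := by
    rcases List.mem_cons.mp hyL with h | h
    · exact absurd h hyp
    · rcases List.mem_append.mp h with h | h
      · exact h
      · exact absurd (List.mem_singleton.mp h) hyq
  obtain ⟨l₂a, l₂b, rfl⟩ := List.append_of_mem hyl₂
  by_cases ha2 : a ∈ C₂
  · by_cases ha1 : a ∈ C₁
    · -- a ∈ Y : pattern a, p, y, q  (Y X pattern)
      have hay : a ≠ y := by
        intro h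
        have hnd' : ((l₁ ++ p :: l₂a) ++ y :: (l₂b ++ q :: l₃)).Nodup := by
          have : t = (l₁ ++ p :: l₂a) ++ y :: (l₂b ++ q :: l₃) := by simp [ht]
          rwa [this] at hnd
        have hymem : y ∉ (l₁ ++ p :: l₂a) ++ (l₂b ++ q :: l₃) :=
          (List.nodup_cons.mp (List.nodup_middle.mp hnd')).1
        have hamem : a ∈ l₂b ++ q :: l₃ := by
          have h1 : t.getLast? = (q :: l₃).getLast? := by
            rw [show t = (l₁ ++ p :: (l₂a ++ y :: l₂b)) ++ q :: l₃ by simp [ht],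
              List.getLast?_append_cons]
          have := mem_of_getLast?' (h1 ▸ hlt : (q :: l₃).getLast? = some a)
          exact List.mem_append.mpr (Or.inr this)
        exact hymem (h ▸ List.mem_append.mpr (Or.inr hamem))
      exact Or.inr ⟨a, p, y, q, [], l₁, l₂a, l₂b, l₃, ⟨ha1, ha2⟩, ⟨hy1, hy2⟩,
        hpX, hqX, hay, hpq, by simp [ht]⟩
    · -- a ∈ C₂ \ C₁ : find y' in l₁, pattern y', p, y, q  (Y X pattern)
      have hinfix2 : (a :: l₁ ++ [p]) <:+: (a :: t) := ⟨[], l₂a ++ y :: l₂b ++ q :: l₃, by simp [ht]⟩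
      have hch2 : List.Chain' G.Adj (a :: l₁ ++ [p]) := hchain.infix hinfix2
      obtain ⟨y', hy'L, hy'2, hy'1⟩ := cross_list hcov' hsep' _ hch2 a p rfl
        (by rw [show a :: l₁ ++ [p] = (a :: l₁) ++ [p] from rfl, getLast?_concat']) ha2 hp1
      have hy'a : y' ≠ a := fun h => ha1 (h ▸ hy'1)
      have hy'p : y' ≠ p := fun h => hp2 (h ▸ hy'2)
      have hy'l₁ : y' ∈ l₁ := by
        rcases List.mem_cons.mp hy'L with h | h
        · exact absurd h hy'a
        · rcases List.mem_append.mp h with h | h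
          · exact h
          · exact absurd (List.mem_singleton.mp h) hy'p
      obtain ⟨l₁a, l₁b, rfl⟩ := List.append_of_mem hy'l₁
      have hy'y : y' ≠ y := by
        intro h
        subst h
        have hnd' : ((l₁a ++ y' :: l₁b) ++ (p :: (l₂a ++ y' :: l₂b) ++ q :: l₃)).Nodup := by
          have heq : t = (l₁a ++ y' :: l₁b) ++ (p :: (l₂a ++ y' :: l₂b) ++ q :: l₃) := by
            simp [ht]
          rwa [heq] at hnd
        have hdisj := (List.nodup_append'.mp hnd').2.2
        exact List.disjoint_left.mp hdisj
          (show y' ∈ l₁a ++ y' :: l₁b by simp)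
          (show y' ∈ p :: (l₂a ++ y' :: l₂b) ++ q :: l₃ by simp)
      exact Or.inr ⟨y', p, y, q, a :: l₁a, l₁b, l₂a, l₂b, l₃, ⟨hy'1, hy'2⟩, ⟨hy1, hy2⟩,
        hpX, hqX, hy'y, hpq, by simp [ht]⟩
  · -- a ∈ C₁ \ C₂ : find y' in l₃, pattern p, y, q, y'  (X Y pattern)
    have ha1 : a ∈ C₁ := by
      have hmem : a ∈ C₁ ∪ C₂ := by rw [hcov]; trivial
      rcases hmem with h | h
      · exact h
      · exact absurd h ha2
    have hlq : (q :: l₃).getLast? = some a := by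
      rw [show t = (l₁ ++ p :: (l₂a ++ y :: l₂b)) ++ q :: l₃ by simp [ht],
        List.getLast?_append_cons] at hlt
      exact hlt
    cases l₃ with
    | nil =>
      simp only [List.getLast?_singleton, Option.some.injEq] at hlq
      exact absurd (hlq ▸ hq2) ha2
    | cons c l₃' =>
      have hinfix3 : (q :: c :: l₃') <:+: (a :: t) :=
        ⟨a :: l₁ ++ p :: (l₂a ++ y :: l₂b), [], by simp [ht]⟩
      have hch3 : List.Chain' G.Adj (q :: c :: l₃') := hchain.infix hinfix3
      obtain ⟨y', hy'L, hy'2, hy'1⟩ := cross_list hcov' hsep' _ hch3 q a rfl hlq hq2 ha1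
      have hy'q : y' ≠ q := fun h => hq1 (h ▸ hy'1)
      have hy'l₃ : y' ∈ c :: l₃' := by
        rcases List.mem_cons.mp hy'L with h | h
        · exact absurd h hy'q
        · exact h
      obtain ⟨l₃a, l₃b, hl₃⟩ := List.append_of_mem hy'l₃
      have hyy' : y ≠ y' := by
        intro h
        subst h
        have hnd' : ((l₁ ++ p :: (l₂a ++ y :: l₂b)) ++ (q :: c :: l₃')).Nodup := by
          have heq : t = (l₁ ++ p :: (l₂a ++ y :: l₂b)) ++ (q :: c :: l₃') := by simp [ht]
          rwa [heq] at hnd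
        have hdisj := (List.nodup_append'.mp hnd').2.2
        exact List.disjoint_left.mp hdisj
          (show y ∈ l₁ ++ p :: (l₂a ++ y :: l₂b) by simp)
          (List.mem_cons_of_mem _ hy'l₃)
      exact Or.inl ⟨p, y, q, y', a :: l₁, l₂a, l₂b, l₃a, l₃b, hpX, hqX, ⟨hy1, hy2⟩,
        ⟨hy'1, hy'2⟩, hpq, hyy', by simp [ht, hl₃]⟩

private lemma cycle_core {C₁ C₂ X : Set V}
    (hcov : C₁ ∪ C₂ = Set.univ)
    (hsep : ∀ u ∈ C₁ \ C₂, ∀ v ∈ C₂ \ C₁, ¬G.Adj u v)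
    (hd : ∀ v ∈ X, v ∈ C₁ → v ∈ C₂ → False)
    {a p q : V} {O : G.Walk a a} (hc : O.IsCycle) (hlen : O.length ≤ r)
    (hp : p ∈ O.support) (hq : q ∈ O.support)
    (hpX : p ∈ X) (hp1 : p ∈ C₁) (hqX : q ∈ X) (hq2 : q ∈ C₂) :
    Alternates G r X (C₁ ∩ C₂) ∨ Alternates G r (C₁ ∩ C₂) X := by
  classical
  have hp2 : p ∉ C₂ := fun h => hd p hpX hp1 h
  have hq1 : q ∉ C₁ := fun h => hd q hqX h hq2
  have hpq : p ≠ q := fun h => hq1 (h ▸ hp1)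
  have hs : O.support = a :: O.support.tail := O.support_eq_cons
  set t := O.support.tail with htdef
  have hnd : t.Nodup := hc.support_nodup
  have hlast : (a :: t).getLast? = some a := by rw [← hs]; exact support_getLast? O
  have htne : t ≠ [] := by
    intro h
    rw [h] at hs
    rw [hs] at hp hq
    simp at hp hq
    exact hpq (hp.trans hq.symm)
  have hlt : t.getLast? = some a := by
    rwa [show a :: t = [a] ++ t from rfl, List.getLast?_append_of_ne_nil _ htne] at hlast
  have hat : a ∈ t := mem_of_getLast?' hlt
  have hpt : p ∈ t := by
    rw [hs] at hp
    rcases List.mem_cons.mp hp with h | h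
    · exact h ▸ hat
    · exact h
  have hqt : q ∈ t := by
    rw [hs] at hq
    rcases List.mem_cons.mp hq with h | h
    · exact h ▸ hat
    · exact h
  have hchain : List.Chain' G.Adj (a :: t) := by
    rw [← hs]; exact O.isChain_adj_support
  obtain ⟨m, m', hm⟩ := List.append_of_mem hpt
  have hqmm : q ∈ m ∨ q ∈ m' := by
    rw [hm] at hqt
    rcases List.mem_append.mp hqt with h | h
    · exact Or.inl h
    · rcases List.mem_cons.mp h with h | h
      · exact absurd h.symm hpq
      · exact Or.inr h
  rcases hqmm with hqm | hqm'
  · -- q before p : apply ordered_core with C₁ and C₂ swapped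
    obtain ⟨m1, m2, hm1⟩ := List.append_of_mem hqm
    have ht' : t = m1 ++ q :: m2 ++ p :: m' := by simp [hm, hm1]
    have hd' : ∀ v ∈ X, v ∈ C₂ → v ∈ C₁ → False := fun v hv h2 h1 => hd v hv h1 h2
    have hsep' : ∀ u ∈ C₂ \ C₁, ∀ v ∈ C₁ \ C₂, ¬G.Adj u v :=
      fun u hu v hv hadj => hsep v hv u hu hadj.symm
    have hcov' : C₂ ∪ C₁ = Set.univ := by rw [Set.union_comm]; exact hcov
    have := ordered_core hcov' hsep' hd' hchain ht' hnd hlast hqX hq2 hq1 hpX hp1 hp2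
    rw [Set.inter_comm C₂ C₁] at this
    rcases this with h | h
    · exact Or.inl (alt_of_pattern hc hlen (hs ▸ h))
    · exact Or.inr (alt_of_pattern hc hlen (hs ▸ h))
  · obtain ⟨m1, m2, hm1⟩ := List.append_of_mem hqm'
    have ht' : t = m ++ p :: m1 ++ q :: m2 := by simp [hm, hm1]
    have := ordered_core hcov hsep hd hchain ht' hnd hlast hpX hp1 hp2 hqX hq2 hq1
    rcases this with h | h
    · exact Or.inl (alt_of_pattern hc hlen (hs ▸ h))
    · exact Or.inr (alt_of_pattern hc hlen (hs ▸ h))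

private lemma adj_of_length_one : ∀ {u v : V} (P : G.Walk u v), P.length = 1 → G.Adj u v := by
  intro u v P
  cases P with
  | nil => intro h; simp at h
  | cons h P' =>
    cases P' with
    | nil => intro _; exact h
    | cons h' P'' =>
      intro hl
      simp only [Walk.length_cons] at hl
      omega

private lemma exists_last_edge : ∀ {u v : V} (P : G.Walk u v), u ≠ v →
    ∃ w, s(v, w) ∈ P.edges := by
  intro u v P
  induction P with
  | nil => intro h; exact absurd rfl h
  | @cons u w v h P' ih =>
    intro _
    by_cases hwv : w = v
    · subst hwv
      exact ⟨u, by rw [Walk.edges_cons, Sym2.eq_swap]; exact List.mem_cons_self⟩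
    · obtain ⟨z, hz⟩ := ih hwv
      exact ⟨z, by rw [Walk.edges_cons]; exact List.mem_cons_of_mem _ hz⟩

private lemma find_cross {C₁ C₂ X : Set V} (hcov : C₁ ∪ C₂ = Set.univ) :
    ∀ {u v : V} {W : G.Walk u v}, ConcatLocalPaths G r X W → u ∈ C₁ → v ∈ C₂ →
      ∃ (p q : V) (P : G.Walk p q), IsLocalXPath G r X P ∧ p ∈ C₁ ∧ q ∈ C₂ := by
  intro u v W h
  induction h with
  | single W hW => intro hu hv; exact ⟨_, _, W, hW, hu, hv⟩
  | @comp u v w W₁ W₂ hP hC ih =>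
    intro hu hw
    by_cases hv : v ∈ C₂
    · exact ⟨_, _, W₁, hP, hu, hv⟩
    · have hv1 : v ∈ C₁ := by
        have hmem : v ∈ C₁ ∪ C₂ := by rw [hcov]; trivial
        rcases hmem with h | h
        · exact h
        · exact absurd h hv
      exact ih hv1 hw

private lemma core_lemma {C₁ C₂ X : Set V}
    (h₂ : IsSep G C₁ C₂) (ht : Rtomic G r X)
    (hd : ∀ v ∈ X, v ∈ C₁ → v ∈ C₂ → False)
    {x₁ x₂ : V} (hx₁X : x₁ ∈ X) (hx₁ : x₁ ∈ C₁) (hx₂X : x₂ ∈ X) (hx₂ : x₂ ∈ C₂) :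
    Alternates G r X (C₁ ∩ C₂) ∨ Alternates G r (C₁ ∩ C₂) X := by
  have hne : x₁ ≠ x₂ := fun h => hd x₁ hx₁X hx₁ (h ▸ hx₂)
  obtain ⟨W, hW⟩ := ht x₁ hx₁X x₂ hx₂X hne
  obtain ⟨p, q, P, hP, hp1, hq2⟩ := find_cross h₂.1 hW.1 hx₁ hx₂
  have hpX : p ∈ X := hP.1.1.1
  have hqX : q ∈ X := hP.1.1.2.1
  have hp2 : p ∉ C₂ := fun h => hd p hpX hp1 h
  have hq1 : q ∉ C₁ := fun h => hd q hqX h hq2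
  have hpq : p ≠ q := fun h => hq1 (h ▸ hp1)
  rcases hP.1.2 with ⟨aO, O, hOc, hOlen, hOe⟩ | hlen1
  · -- cycle case
    have hpO : p ∈ O.support := by
      cases P with
      | nil => exact absurd rfl hpq
      | @cons u w v h P' =>
        exact O.fst_mem_support_of_mem_edges (hOe _ (by
          rw [Walk.edges_cons]; exact List.mem_cons_self))
    have hqO : q ∈ O.support := by
      obtain ⟨w, hw⟩ := exists_last_edge P hpq
      exact O.fst_mem_support_of_mem_edges (hOe _ hw)
    exact cycle_core h₂.1 h₂.2 hd hOc hOlen hpO hqO hpX hp1 hqX hq2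
  · exact absurd (adj_of_length_one P hlen1) (h₂.2 p ⟨hp1, hp2⟩ q ⟨hq2, hq1⟩)

private lemma alternates_swap {X Y : Set V}
    (hd : ∀ v ∈ X, v ∈ Y → False) :
    Alternates G r X Y → Alternates G r Y X := by
  classical
  rintro ⟨a, C, hc, hlen, x, y, x', y', l₁, l₂, l₃, l₄, l₅, hx, hx', hy, hy', hxx, hyy, hsup⟩
  cases l₁ with
  | nil =>
    -- the cycle starts (and ends) at x
    have hax : a = x := by
      have h1 : C.support = a :: C.support.tail := C.support_eq_cons
      rw [hsup] at h1
      exact (List.cons.inj h1.symm).1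
    rcases List.eq_nil_or_concat' l₅ with rfl | ⟨l₅', z, rfl⟩
    · exfalso
      have hgl : C.support.getLast? = some y' := by
        rw [show C.support = (x :: l₂ ++ y :: l₃ ++ x' :: l₄) ++ [y'] by simp [hsup],
          getLast?_concat']
      rw [support_getLast? C, Option.some.injEq] at hgl
      have hxy' : x = y' := by rw [← hax]; exact hgl
      exact hd x hx (hxy'.symm ▸ hy')
    · have hgl : C.support.getLast? = some z := by
        rw [show C.support = (x :: l₂ ++ y :: l₃ ++ x' :: l₄ ++ y' :: l₅') ++ [z]
          by simp [hsup], getLast?_concat']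
      rw [support_getLast? C, Option.some.injEq] at hgl
      have hzx : z = x := by rw [← hgl, hax]
      refine ⟨a, C, hc, hlen, y, x', y', x, x :: l₂, l₃, l₄, l₅', [], hy, hy', hx', hx,
        hyy, fun h => hxx h.symm, ?_⟩
      rw [hsup, hzx]
      simp
  | cons b l₁' =>
    have hW : C.support = (a :: (l₁' ++ x :: l₂)) ++ y :: (l₃ ++ x' :: l₄ ++ y' :: l₅) := by
      have h1 : C.support = a :: C.support.tail := C.support_eq_cons
      rw [hsup] at h1
      have hab : b = a := (List.cons.inj h1.symm).1.symm
      rw [hsup, hab]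
      simp
    set Wl : List V := l₃ ++ x' :: l₄ ++ y' :: l₅ with hWl
    have htail : C.support.tail = (l₁' ++ x :: l₂) ++ y :: Wl := by rw [hW]; rfl
    have hnd : ((l₁' ++ x :: l₂) ++ y :: Wl).Nodup := htail ▸ hc.support_nodup
    have hymid := List.nodup_cons.mp (List.nodup_middle.mp hnd)
    have hynU : y ∉ l₁' ++ x :: l₂ := fun h => hymid.1 (List.mem_append.mpr (Or.inl h))
    have hynW : y ∉ Wl := fun h => hymid.1 (List.mem_append.mpr (Or.inr h))
    have hWlne : Wl ≠ [] := by rw [hWl]; simp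
    have hya : y ≠ a := by
      intro h
      have hlt : C.support.tail.getLast? = some a := by
        have h1 : C.support.getLast? = some a := support_getLast? C
        rwa [show C.support = [a] ++ C.support.tail from C.support_eq_cons,
          List.getLast?_append_of_ne_nil _ (by rw [htail]; simp)] at h1
      rw [htail, show (l₁' ++ x :: l₂) ++ y :: Wl = ((l₁' ++ x :: l₂) ++ [y]) ++ Wl
        by simp, List.getLast?_append_of_ne_nil _ hWlne] at hlt
      exact hynW (h ▸ mem_of_getLast?' hlt)
    have hymem : y ∈ C.support := by rw [hW]; simp
    -- rotate the cycle at y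
    have hrot : C.rotate y hymem = (C.dropUntil y hymem).append (C.takeUntil y hymem) := rfl
    have hc' := hc.rotate hymem
    have hlen' : (C.rotate y hymem).length ≤ r := by
      have h1 := congrArg Walk.length (C.take_spec hymem)
      rw [Walk.length_append] at h1
      rw [hrot, Walk.length_append]
      omega
    have hTD := congrArg Walk.support (C.take_spec hymem)
    rw [Walk.support_append] at hTD
    obtain ⟨Tl, hTl⟩ := support_concat (C.takeUntil y hymem)
    have hcount := C.count_support_takeUntil_eq_one hymem
    have hynTl : y ∉ Tl := by
      intro hmem
      have h2 : (Tl ++ [y]).count y = Tl.count y + 1 := by simp [List.count_append]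
      rw [hTl, h2] at hcount
      have h3 : 0 < Tl.count y := List.count_pos_iff.mpr hmem
      omega
    have hsplit : Tl ++ y :: (C.dropUntil y hymem).support.tail
        = (a :: (l₁' ++ x :: l₂)) ++ y :: Wl := by
      rw [← hW, ← hTD, hTl]
      simp
    have hynaU : y ∉ a :: (l₁' ++ x :: l₂) := by
      intro h
      rcases List.mem_cons.mp h with h | h
      · exact hya h
      · exact hynU h
    obtain ⟨hTlEq, hDtail⟩ := split_unique Tl (a :: (l₁' ++ x :: l₂)) hsplit hynTl hynaU
    have hDsup : (C.dropUntil y hymem).support = y :: Wl := by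
      rw [(C.dropUntil y hymem).support_eq_cons, hDtail]
    have hrotsup : (C.rotate y hymem).support = (y :: Wl) ++ ((l₁' ++ x :: l₂) ++ [y]) := by
      rw [hrot, Walk.support_append, hDsup, hTl, hTlEq]
      simp
    refine ⟨y, C.rotate y hymem, hc', hlen', y, x', y', x, [], l₃, l₄, l₅ ++ l₁',
      l₂ ++ [y], hy, hy', hx', hx, hyy, fun h => hxx h.symm, ?_⟩
    rw [hrotsup, hWl]
    simp

private lemma isSep_symm {A B : Set V} (h : IsSep G A B) : IsSep G B A :=
  ⟨by rw [Set.union_comm]; exact h.1, fun a ha b hb hadj => h.2 b hb a ha hadj.symm⟩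

private lemma corner_empty (hG : G.Connected) {A₁ A₂ C₁ C₂ : Set V}
    (h₁ : IsSep G A₁ A₂) (h₂ : IsSep G C₁ C₂)
    (hXC : A₁ ∩ A₂ ∩ C₂ = ∅) (hYA : C₁ ∩ C₂ ∩ A₂ = ∅)
    (hXne : (A₁ ∩ A₂).Nonempty) : A₂ ∩ C₂ = ∅ := by
  rw [Set.eq_empty_iff_forall_notMem]
  rintro v ⟨hv2, hvC2⟩
  obtain ⟨x, hxA1, hxA2⟩ := hXne
  have hvA1 : v ∉ A₁ := fun h =>
    Set.eq_empty_iff_forall_notMem.mp hXC v ⟨⟨h, hv2⟩, hvC2⟩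
  have hvC1 : v ∉ C₁ := fun h =>
    Set.eq_empty_iff_forall_notMem.mp hYA v ⟨⟨h, hvC2⟩, hv2⟩
  obtain ⟨W⟩ := hG.preconnected v x
  obtain ⟨c, d, hadj, hcS, hdS⟩ :=
    exists_crossing_adj (S := A₁ᶜ ∩ C₁ᶜ) W ⟨hvA1, hvC1⟩ (fun h => h.1 hxA1)
  have hcA2 : c ∈ A₂ := by
    have hmem : c ∈ A₁ ∪ A₂ := by rw [h₁.1]; trivial
    rcases hmem with h | h
    · exact absurd h hcS.1
    · exact h
  have hcC2 : c ∈ C₂ := by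
    have hmem : c ∈ C₁ ∪ C₂ := by rw [h₂.1]; trivial
    rcases hmem with h | h
    · exact absurd h hcS.2
    · exact h
  by_cases hdA : d ∈ A₁
  · have hdA2 : d ∈ A₂ := by
      by_contra hd2
      exact h₁.2 d ⟨hdA, hd2⟩ c ⟨hcA2, hcS.1⟩ hadj.symm
    have hdC2 : d ∉ C₂ := fun h =>
      Set.eq_empty_iff_forall_notMem.mp hXC d ⟨⟨hdA, hdA2⟩, h⟩
    have hdC1 : d ∈ C₁ := by
      have hmem : d ∈ C₁ ∪ C₂ := by rw [h₂.1]; trivial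
      rcases hmem with h | h
      · exact h
      · exact absurd h hdC2
    exact h₂.2 d ⟨hdC1, hdC2⟩ c ⟨hcC2, hcS.2⟩ hadj.symm
  · have hdC1 : d ∈ C₁ := by
      by_contra hdC1
      exact hdS ⟨hdA, hdC1⟩
    have hdC2 : d ∈ C₂ := by
      by_contra hd2
      exact h₂.2 d ⟨hdC1, hd2⟩ c ⟨hcC2, hcS.2⟩ hadj.symm
    have hdA2 : d ∉ A₂ := fun h =>
      Set.eq_empty_iff_forall_notMem.mp hYA d ⟨⟨hdC1, hdC2⟩, h⟩
    have : d ∈ A₁ ∪ A₂ := by rw [h₁.1]; trivial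
    rcases this with h | h
    · exact hdA h
    · exact hdA2 h

end Statement9Aux

/-- If two separations of a connected graph with `r`-tomic
separators `X` and `Y` cross, then `X` and `Y` are `r`-coupled. -/
theorem statement9 {V : Type*} (G : SimpleGraph V) (r : ℕ) (hG : G.Connected)
    (A₁ A₂ C₁ C₂ : Set V)
    (h₁ : IsSep G A₁ A₂) (h₂ : IsSep G C₁ C₂)
    (ht₁ : Rtomic G r (A₁ ∩ A₂)) (ht₂ : Rtomic G r (C₁ ∩ C₂))
    (hcross : Crosses (A₁, A₂) (C₁, C₂)) :
    RCoupled G r (A₁ ∩ A₂) (C₁ ∩ C₂) := by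
  classical
  by_cases hne : ((A₁ ∩ A₂) ∩ (C₁ ∩ C₂)).Nonempty
  · exact Or.inl hne
  have hd : ∀ v ∈ A₁ ∩ A₂, v ∈ C₁ ∩ C₂ → False := fun v hv hv' => hne ⟨v, hv, hv'⟩
  -- all four corners are nonempty, else the separations would be nested
  have c12 : (A₁ ∩ C₂).Nonempty := by
    rw [Set.nonempty_iff_ne_empty]
    intro hE
    refine hcross (Or.inl ⟨fun v hv => ?_, fun v hv => ?_⟩)
    · have : v ∈ C₁ ∪ C₂ := by rw [h₂.1]; trivial
      rcases this with h | h
      · exact h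
      · exact absurd ⟨hv, h⟩ (Set.eq_empty_iff_forall_notMem.mp hE v)
    · have : v ∈ A₁ ∪ A₂ := by rw [h₁.1]; trivial
      rcases this with h | h
      · exact absurd ⟨h, hv⟩ (Set.eq_empty_iff_forall_notMem.mp hE v)
      · exact h
  have c11 : (A₁ ∩ C₁).Nonempty := by
    rw [Set.nonempty_iff_ne_empty]
    intro hE
    refine hcross (Or.inr (Or.inl ⟨fun v hv => ?_, fun v hv => ?_⟩))
    · have : v ∈ C₁ ∪ C₂ := by rw [h₂.1]; trivial
      rcases this with h | h
      · exact absurd ⟨hv, h⟩ (Set.eq_empty_iff_forall_notMem.mp hE v)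
      · exact h
    · have : v ∈ A₁ ∪ A₂ := by rw [h₁.1]; trivial
      rcases this with h | h
      · exact absurd ⟨h, hv⟩ (Set.eq_empty_iff_forall_notMem.mp hE v)
      · exact h
  have c22 : (A₂ ∩ C₂).Nonempty := by
    rw [Set.nonempty_iff_ne_empty]
    intro hE
    refine hcross (Or.inr (Or.inr (Or.inl ⟨fun v hv => ?_, fun v hv => ?_⟩)))
    · have : v ∈ C₁ ∪ C₂ := by rw [h₂.1]; trivial
      rcases this with h | h
      · exact h
      · exact absurd ⟨hv, h⟩ (Set.eq_empty_iff_forall_notMem.mp hE v)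
    · have : v ∈ A₁ ∪ A₂ := by rw [h₁.1]; trivial
      rcases this with h | h
      · exact h
      · exact absurd ⟨h, hv⟩ (Set.eq_empty_iff_forall_notMem.mp hE v)
  have c21 : (A₂ ∩ C₁).Nonempty := by
    rw [Set.nonempty_iff_ne_empty]
    intro hE
    refine hcross (Or.inr (Or.inr (Or.inr ⟨fun v hv => ?_, fun v hv => ?_⟩)))
    · have : v ∈ C₁ ∪ C₂ := by rw [h₂.1]; trivial
      rcases this with h | h
      · exact absurd ⟨hv, h⟩ (Set.eq_empty_iff_forall_notMem.mp hE v)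
      · exact h
    · have : v ∈ A₁ ∪ A₂ := by rw [h₁.1]; trivial
      rcases this with h | h
      · exact h
      · exact absurd ⟨h, hv⟩ (Set.eq_empty_iff_forall_notMem.mp hE v)
  -- the separators are nonempty
  have hXne : (A₁ ∩ A₂).Nonempty := by
    rw [Set.nonempty_iff_ne_empty]
    intro hE
    obtain ⟨a₁, ha₁, -⟩ := c11
    obtain ⟨a₂, ha₂, -⟩ := c21
    have ha₂1 : a₂ ∉ A₁ := fun h => Set.eq_empty_iff_forall_notMem.mp hE a₂ ⟨h, ha₂⟩
    obtain ⟨W⟩ := hG.preconnected a₁ a₂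
    obtain ⟨c, d, hadj, hcS, hdS⟩ := exists_crossing_adj (S := A₁) W ha₁ ha₂1
    have hc2 : c ∉ A₂ := fun h => Set.eq_empty_iff_forall_notMem.mp hE c ⟨hcS, h⟩
    have hd2 : d ∈ A₂ := by
      have : d ∈ A₁ ∪ A₂ := by rw [h₁.1]; trivial
      rcases this with h | h
      · exact absurd h hdS
      · exact h
    exact h₁.2 c ⟨hcS, hc2⟩ d ⟨hd2, hdS⟩ hadj
  have hYne : (C₁ ∩ C₂).Nonempty := by
    rw [Set.nonempty_iff_ne_empty]
    intro hE
    obtain ⟨a₁, -, ha₁⟩ := c11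
    obtain ⟨a₂, -, ha₂⟩ := c12
    have ha₂1 : a₂ ∉ C₁ := fun h => Set.eq_empty_iff_forall_notMem.mp hE a₂ ⟨h, ha₂⟩
    obtain ⟨W⟩ := hG.preconnected a₁ a₂
    obtain ⟨c, d, hadj, hcS, hdS⟩ := exists_crossing_adj (S := C₁) W ha₁ ha₂1
    have hc2 : c ∉ C₂ := fun h => Set.eq_empty_iff_forall_notMem.mp hE c ⟨hcS, h⟩
    have hd2 : d ∈ C₂ := by
      have : d ∈ C₁ ∪ C₂ := by rw [h₂.1]; trivial
      rcases this with h | h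
      · exact absurd h hdS
      · exact h
    exact h₂.2 c ⟨hcS, hc2⟩ d ⟨hd2, hdS⟩ hadj
  -- X meets both sides of {C₁,C₂}, or Y meets both sides of {A₁,A₂}
  have key : (((A₁ ∩ A₂) ∩ C₁).Nonempty ∧ ((A₁ ∩ A₂) ∩ C₂).Nonempty) ∨
      (((C₁ ∩ C₂) ∩ A₁).Nonempty ∧ ((C₁ ∩ C₂) ∩ A₂).Nonempty) := by
    by_contra hk
    rw [not_or, not_and_or, not_and_or] at hk
    obtain ⟨hkX, hkY⟩ := hk
    rw [Set.not_nonempty_iff_eq_empty, Set.not_nonempty_iff_eq_empty] at hkX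
    rw [Set.not_nonempty_iff_eq_empty, Set.not_nonempty_iff_eq_empty] at hkY
    rcases hkX with hX1 | hX2 <;> rcases hkY with hY1 | hY2
    · -- X ⊆ C₂, Y ⊆ A₂  ⇒  A₁ ∩ C₁ = ∅
      refine Set.nonempty_iff_ne_empty.mp c11
        (corner_empty hG (isSep_symm h₁) (isSep_symm h₂) ?_ ?_ ?_)
      · rw [Set.inter_comm A₂ A₁]; exact hX1
      · rw [Set.inter_comm C₂ C₁]; exact hY1
      · rw [Set.inter_comm A₂ A₁]; exact hXne
    · -- X ⊆ C₂, Y ⊆ A₁  ⇒  A₂ ∩ C₁ = ∅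
      refine Set.nonempty_iff_ne_empty.mp c21
        (corner_empty hG h₁ (isSep_symm h₂) hX1 ?_ hXne)
      rw [Set.inter_comm C₂ C₁]; exact hY2
    · -- X ⊆ C₁, Y ⊆ A₂  ⇒  A₁ ∩ C₂ = ∅
      refine Set.nonempty_iff_ne_empty.mp c12
        (corner_empty hG (isSep_symm h₁) h₂ ?_ hY1 ?_)
      · rw [Set.inter_comm A₂ A₁]; exact hX2
      · rw [Set.inter_comm A₂ A₁]; exact hXne
    · -- X ⊆ C₁, Y ⊆ A₁  ⇒  A₂ ∩ C₂ = ∅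
      exact Set.nonempty_iff_ne_empty.mp c22 (corner_empty hG h₁ h₂ hX2 hY2 hXne)
  have hdisj : Disjoint (A₁ ∩ A₂) (C₁ ∩ C₂) :=
    Set.disjoint_left.mpr fun {a} ha hb => hd a ha hb
  refine Or.inr ⟨hdisj, ?_⟩
  rcases key with ⟨⟨x₁, hx₁X, hx₁C⟩, ⟨x₂, hx₂X, hx₂C⟩⟩ | ⟨⟨y₁, hy₁Y, hy₁A⟩, ⟨y₂, hy₂Y, hy₂A⟩⟩
  · have hd' : ∀ v ∈ A₁ ∩ A₂, v ∈ C₁ → v ∈ C₂ → False :=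
      fun v hv h1 h2 => hd v hv ⟨h1, h2⟩
    rcases core_lemma h₂ ht₁ hd' hx₁X hx₁C hx₂X hx₂C with h | h
    · exact h
    · exact alternates_swap (fun v hv hx => hd v hx hv) h
  · have hd' : ∀ v ∈ C₁ ∩ C₂, v ∈ A₁ → v ∈ A₂ → False :=
      fun v hv h1 h2 => hd v ⟨h1, h2⟩ hv
    rcases core_lemma h₁ ht₂ hd' hy₁Y hy₁A hy₂Y hy₂A with h | h
    · exact alternates_swap (fun v hv hx => hd v hx hv) h
    · exact h

end LS
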